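/- (Stein-type decomposition) Every countable torsion-free abelian group A decomposes as A = F ⊕ B where F is free and Hom(B, ℤ) = 0. -/

import Mathlib

open Submodule

section SteinAux

variable {Q : Type*} [AddCommGroup Q]

/-- Saturation (pure closure) of a submodule. -/
def mySat (N : Submodule ℤ Q) : Submodule ℤ Q where
  carrier := {x | ∃ c : ℤ, c ≠ 0 ∧ c • x ∈ N}
  zero_mem' := ⟨1, one_ne_zero, by simp⟩
  add_mem' := by
    rintro a b ⟨c, hc, hca⟩ ⟨d, hd, hdb⟩
    refine ⟨c * d, mul_ne_zero hc hd, ?_⟩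
    have : (c * d) • (a + b) = d • (c • a) + c • (d • b) := by
      rw [smul_add]; rw [smul_smul, smul_smul, mul_comm d c]
    rw [this]
    exact N.add_mem (N.smul_mem d hca) (N.smul_mem c hdb)
  smul_mem' := by
    rintro r a ⟨c, hc, hca⟩
    exact ⟨c, hc, by rw [smul_comm]; exact N.smul_mem r hca⟩

lemma le_mySat (N : Submodule ℤ Q) : N ≤ mySat N := fun x hx => ⟨1, one_ne_zero, by simpa⟩

lemma mySat_smul_mem {N : Submodule ℤ Q} {c : ℤ} {x : Q} (hc : c ≠ 0) (h : c • x ∈ mySat N) :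
    x ∈ mySat N := by
  obtain ⟨d, hd, hdx⟩ := h
  exact ⟨d * c, mul_ne_zero hd hc, by rwa [mul_smul]⟩


lemma mem_mySat {N : Submodule ℤ Q} {x : Q} :
    x ∈ mySat N ↔ ∃ c : ℤ, c ≠ 0 ∧ c • x ∈ N := Iff.rfl

lemma exists_finset_sep {ι : Type*} [DecidableEq ι] (W : Submodule ℚ (ι → ℚ)) [FiniteDimensional ℚ W] :
    ∃ J : Finset ι, ∀ w ∈ W, (∀ i ∈ J, w i = 0) → w = 0 := by
  generalize hn : Module.finrank ℚ W = n
  induction n using Nat.strong_induction_on generalizing W with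
  | _ n ih =>
    by_cases hW : ∀ w ∈ W, w = 0
    · exact ⟨∅, fun w hw _ => hW w hw⟩
    push_neg at hW
    obtain ⟨w0, hw0W, hw0⟩ := hW
    obtain ⟨i0, hi0⟩ : ∃ i, w0 i ≠ 0 := by
      by_contra h; push_neg at h; exact hw0 (funext h)
    set W' := W ⊓ LinearMap.ker (LinearMap.proj (R := ℚ) (φ := fun _ : ι => ℚ) i0) with hW'def
    haveI : FiniteDimensional ℚ W' := Submodule.finiteDimensional_of_le inf_le_left
    have hlt : W' < W := by
      refine lt_of_le_of_ne inf_le_left (fun h => ?_)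
      rw [← h] at hw0W
      exact hi0 hw0W.2
    have hrk : Module.finrank ℚ W' < n := hn ▸ Submodule.finrank_lt_finrank_of_lt hlt
    obtain ⟨J', hJ'⟩ := ih _ hrk W' rfl
    refine ⟨insert i0 J', fun w hw hz => ?_⟩
    refine hJ' w ⟨hw, ?_⟩ (fun i hi => hz i (Finset.mem_insert_of_mem hi))
    exact hz i0 (Finset.mem_insert_self _ _)


/-- cast map -/
noncomputable def castPi (ι : Type*) : (ι → ℤ) →ₗ[ℤ] (ι → ℚ) :=
  LinearMap.pi fun i => (Int.castAddHom ℚ).toIntLinearMap.comp (LinearMap.proj i)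

lemma castPi_inj (ι : Type*) : Function.Injective (castPi ι) := by
  intro x y h
  funext i
  have := congrFun h i
  simpa [castPi] using this

lemma mySat_fg {ι : Type*} (ε : Q →ₗ[ℤ] (ι → ℤ)) (hε : Function.Injective ε)
    (N : Submodule ℤ Q) (hN : N.FG) : (mySat N).FG := by
  classical
  obtain ⟨s, hs⟩ := hN
  set η : Q →ₗ[ℤ] (ι → ℚ) := (castPi ι).comp ε with hη
  set W : Submodule ℚ (ι → ℚ) := span ℚ (η '' (s : Set Q)) with hW
  haveI : FiniteDimensional ℚ W := Module.Finite.span_of_finite ℚ (s.finite_toSet.image η)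
  obtain ⟨J, hJ⟩ := exists_finset_sep W
  -- members of N map into W
  have hNW : ∀ x ∈ N, η x ∈ W := by
    intro x hx
    have h1 : η x ∈ Submodule.map η N := ⟨x, hx, rfl⟩
    rw [← hs, Submodule.map_span] at h1
    have h2 : span ℤ (η '' (s : Set Q)) ≤ (span ℚ (η '' (s : Set Q))).restrictScalars ℤ :=
      span_le.mpr (fun y hy => subset_span hy)
    exact h2 h1
  -- the finite-coordinate projection
  set φ : Q →ₗ[ℤ] (J → ℤ) := LinearMap.pi (fun j : J => (LinearMap.proj (j : ι)).comp ε) with hφ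
  have hinj : ∀ x ∈ mySat N, φ x = 0 → x = 0 := by
    intro x hx h0
    obtain ⟨c, hc, hcx⟩ := mem_mySat.mp hx
    have hzero : η (c • x) = 0 := by
      refine hJ _ (hNW _ hcx) (fun i hi => ?_)
      have h1 : ε x i = 0 := congrFun h0 ⟨i, hi⟩
      have h2 : ε (c • x) i = 0 := by
        rw [map_smul]
        simp [h1]
      have h3 : η (c • x) i = ((ε (c • x) i : ℤ) : ℚ) := rfl
      rw [h3, h2]
      norm_num
    have hε0 : ε (c • x) = 0 := by
      apply castPi_inj ι
      rw [map_zero]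
      exact hzero
    have hεx : c • ε x = 0 := by rw [← map_smul]; exact hε0
    have hx0 : ε x = 0 := by
      funext i
      have := congrFun hεx i
      simp only [Pi.smul_apply, smul_eq_mul, Pi.zero_apply, mul_eq_zero] at this
      tauto
    exact hε (by rw [hx0, map_zero])
  -- conclude FG via Noetherianity of J → ℤ
  set ψ : ↥(mySat N) →ₗ[ℤ] (J → ℤ) := φ.comp (mySat N).subtype with hψ
  have hψinj : Function.Injective ψ := by
    rw [← LinearMap.ker_eq_bot]
    ext ⟨x, hx⟩
    simp only [LinearMap.mem_ker, Submodule.mem_bot, hψ, LinearMap.comp_apply,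
      Submodule.subtype_apply, Submodule.mk_eq_zero]
    exact ⟨fun h => hinj x hx h, fun h => by simp [h, map_zero]⟩
  have hrange : (LinearMap.range ψ).FG := IsNoetherian.noetherian _
  haveI : Module.Finite ℤ ↥(LinearMap.range ψ) := Module.Finite.iff_fg.mpr hrange
  haveI : Module.Finite ℤ ↥(mySat N) :=
    Module.Finite.equiv (LinearEquiv.ofInjective ψ hψinj).symm
  exact Module.Finite.iff_fg.mp inferInstance


/-- Split off a pure finitely generated submodule. -/
lemma exists_compl_pure {P P' : Submodule ℤ Q} (hle : P ≤ P') (hP' : P'.FG)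
    (hpure : ∀ c : ℤ, c ≠ 0 → ∀ x : Q, c • x ∈ P → x ∈ P) :
    ∃ C : Submodule ℤ Q, C ≤ P' ∧ C ⊓ P = ⊥ ∧ C ⊔ P = P' ∧ Module.Free ℤ C := by
  set N : Submodule ℤ ↥P' := P.comap P'.subtype with hN
  haveI : Module.Finite ℤ ↥P' := Module.Finite.iff_fg.mpr hP'
  haveI : Module.Finite ℤ (↥P' ⧸ N) := Module.Finite.quotient ℤ N
  have mkq0 : ∀ z : ↥P', N.mkQ z = 0 ↔ z ∈ N := fun z => by
    rw [Submodule.mkQ_apply, Submodule.Quotient.mk_eq_zero]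
  haveI : NoZeroSMulDivisors ℤ (↥P' ⧸ N) := by
    refine ⟨fun {c x} h => ?_⟩
    rcases eq_or_ne c 0 with hc | hc
    · exact Or.inl hc
    refine Or.inr ?_
    obtain ⟨y, rfl⟩ := N.mkQ_surjective x
    rw [← map_smul, mkq0] at h
    have : (y : Q) ∈ P := hpure c hc y (by simpa [hN] using h)
    rw [mkq0]
    simpa [hN]
  haveI : Module.Free ℤ (↥P' ⧸ N) := Module.free_of_finite_type_torsion_free'
  obtain ⟨σ, hσ⟩ := Module.projective_lifting_property N.mkQ LinearMap.id N.mkQ_surjective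
  have hσinj : Function.Injective σ := by
    intro a b hab
    have := congrArg N.mkQ hab
    have h1 : (N.mkQ ∘ₗ σ) a = (N.mkQ ∘ₗ σ) b := this
    rwa [hσ] at h1
  refine ⟨(LinearMap.range σ).map P'.subtype, Submodule.map_subtype_le _ _, ?_, ?_, ?_⟩
  · rw [eq_bot_iff]
    rintro x ⟨⟨m, ⟨y, rfl⟩, rfl⟩, (hxP : (↑(σ y) : Q) ∈ P)⟩
    have hyN : σ y ∈ N := hxP
    have : N.mkQ (σ y) = 0 := (mkq0 _).mpr hyN
    have hy0 : y = 0 := by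
      have h1 : (N.mkQ ∘ₗ σ) y = 0 := this
      rwa [hσ] at h1
    simp [hy0]
  · apply le_antisymm
    · exact sup_le (Submodule.map_subtype_le _ _) hle
    · intro x hx
      set m : ↥P' := ⟨x, hx⟩ with hm
      have key : N.mkQ (m - σ (N.mkQ m)) = 0 := by
        have h1 : (N.mkQ ∘ₗ σ) (N.mkQ m) = N.mkQ m := by rw [hσ]; rfl
        simp only [map_sub]
        rw [show N.mkQ (σ (N.mkQ m)) = N.mkQ m from h1]
        simp
      have hmem : m - σ (N.mkQ m) ∈ N := (mkq0 _).mp key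
      have : x = (↑(σ (N.mkQ m)) : Q) + ↑(m - σ (N.mkQ m)) := by
        simp [hm]
      rw [this]
      exact Submodule.add_mem_sup ⟨σ (N.mkQ m), ⟨N.mkQ m, rfl⟩, rfl⟩ hmem
  · have e1 : (↥P' ⧸ N) ≃ₗ[ℤ] LinearMap.range σ := LinearEquiv.ofInjective σ hσinj
    have e2 : ↥(LinearMap.range σ) ≃ₗ[ℤ] ↥((LinearMap.range σ).map P'.subtype) :=
      Submodule.equivMapOfInjective P'.subtype (Submodule.injective_subtype P') _
    exact Module.Free.of_equiv (e1.trans e2)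


theorem specker {ι : Type*} [Countable Q]
    (ε : Q →ₗ[ℤ] (ι → ℤ)) (hε : Function.Injective ε) : Module.Free ℤ Q := by
  classical
  have tf : ∀ (c : ℤ) (x : Q), c ≠ 0 → c • x = 0 → x = 0 := by
    intro c x hc h
    have h1 : c • ε x = 0 := by rw [← map_smul, h, map_zero]
    have h2 : ε x = 0 := by
      funext i
      have := congrFun h1 i
      simp only [Pi.smul_apply, smul_eq_mul, Pi.zero_apply, mul_eq_zero] at this
      tauto
    exact hε (by rw [h2, map_zero])
  obtain ⟨q, hq⟩ := exists_surjective_nat Q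
  set P : ℕ → Submodule ℤ Q :=
    fun n => Nat.rec (mySat ⊥) (fun n Pn => mySat (Pn ⊔ span ℤ {q n})) n with hP
  have hP0 : P 0 = mySat ⊥ := rfl
  have hPs : ∀ n, P (n + 1) = mySat (P n ⊔ span ℤ {q n}) := fun n => rfl
  have hfg : ∀ n, (P n).FG := by
    intro n
    induction n with
    | zero => exact mySat_fg ε hε ⊥ fg_bot
    | succ n ih => exact mySat_fg ε hε _ (Submodule.FG.sup ih (fg_span_singleton _))
  have hpure : ∀ n (c : ℤ), c ≠ 0 → ∀ x : Q, c • x ∈ P n → x ∈ P n := by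
    intro n
    cases n with
    | zero => exact fun c hc x hx => mySat_smul_mem hc hx
    | succ n => exact fun c hc x hx => mySat_smul_mem hc hx
  have hmono : ∀ n, P n ≤ P (n + 1) := fun n => le_trans le_sup_left (le_mySat _)
  have hbot : P 0 = ⊥ := by
    rw [hP0, eq_bot_iff]
    rintro x hx
    obtain ⟨c, hc, hcx⟩ := mem_mySat.mp hx
    simp only [Submodule.mem_bot] at hcx ⊢
    exact tf c x hc hcx
  have hqmem : ∀ n, q n ∈ P (n + 1) := fun n =>
    le_mySat _ (le_sup_right (a := P n) (mem_span_singleton_self (q n)))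
  have hC : ∀ n, ∃ C : Submodule ℤ Q,
      C ≤ P (n + 1) ∧ C ⊓ P n = ⊥ ∧ C ⊔ P n = P (n + 1) ∧ Module.Free ℤ C :=
    fun n => exists_compl_pure (hmono n) (hfg (n + 1)) (hpure n)
  choose C hCle hCinf hCsup hCfree using hC
  have hbasis : ∀ n, ∃ u : Set Q, u ⊆ (C n : Set Q) ∧ span ℤ u = C n ∧
      LinearIndependent ℤ (fun x : u => (x : Q)) := by
    intro n
    haveI := hCfree n
    set b := Module.Free.chooseBasis ℤ ↥(C n) with hb
    refine ⟨Set.range (fun i => ((b i : Q))), ?_, ?_, ?_⟩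
    · rintro x ⟨i, rfl⟩
      exact (b i).2
    · have h1 : Set.range (fun i => ((b i : Q))) = (C n).subtype '' Set.range b := by
        rw [← Set.range_comp]; rfl
      rw [h1, ← Submodule.map_span, b.span_eq, Submodule.map_subtype_top]
    · have h1 : LinearIndependent ℤ (fun i => ((b i : Q))) :=
        b.linearIndependent.map' (C n).subtype (Submodule.ker_subtype _)
      exact h1.linearIndepOn_id
  choose u husub huspan huli using hbasis
  set V : ℕ → Set Q := fun n => Nat.rec ∅ (fun n Vn => Vn ∪ u n) n with hV
  have hVs : ∀ n, V (n + 1) = V n ∪ u n := fun n => rfl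
  have hVP : ∀ n, V n ⊆ (P n : Set Q) := by
    intro n
    induction n with
    | zero => simp [hV, hbot]
    | succ n ih =>
      rw [hVs]
      refine Set.union_subset (ih.trans ?_) ((husub n).trans ?_)
      · exact SetLike.coe_subset_coe.mpr (hmono n)
      · exact SetLike.coe_subset_coe.mpr (hCle n)
  have hVli : ∀ n, LinearIndependent ℤ (fun x : V n => (x : Q)) := by
    intro n
    induction n with
    | zero => exact linearIndependent_empty ℤ Q
    | succ n ih =>
      rw [hVs]
      refine LinearIndepOn.id_union (s := V n) (t := u n) ih (huli n) ?_
      have h1 : span ℤ (V n) ≤ P n := span_le.mpr (hVP n)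
      have h2 : Disjoint (P n) (C n) := disjoint_iff.mpr (by rw [inf_comm]; exact hCinf n)
      exact h2.mono h1 (le_of_eq (huspan n))
  have hspanP : ∀ n, P n ≤ span ℤ (V n) := by
    intro n
    induction n with
    | zero => rw [hbot]; exact bot_le
    | succ n ih =>
      rw [← hCsup n, hVs, Set.union_comm]
      rw [span_union]
      exact sup_le_sup (le_of_eq (huspan n).symm) ih
  have hVmono : Monotone V := by
    apply monotone_nat_of_le_succ
    intro n
    rw [hVs]
    exact Set.subset_union_left
  have hli : LinearIndependent ℤ (fun x : (⋃ n, V n) => (x : Q)) :=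
    linearIndepOn_iUnion_of_directed (v := id) hVmono.directed_le hVli
  have hspan : span ℤ (⋃ n, V n) = ⊤ := by
    rw [eq_top_iff]
    intro x _
    obtain ⟨n, rfl⟩ := hq x
    exact span_mono (Set.subset_iUnion V (n + 1)) (hspanP (n + 1) (hqmem n))
  exact Module.Free.of_basis (Module.Basis.mk hli (by rw [Subtype.range_coe, hspan]))

end SteinAux

/-- (Stein-type decomposition) Every countable torsion-free abelian group `A`
decomposes as `A = F ⊕ B` where `F` is free and `Hom(B, ℤ) = 0`. -/
theorem stein_decomposition
    (A : Type*) [AddCommGroup A] [Countable A] [NoZeroSMulDivisors ℤ A] :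
    ∃ F B : AddSubgroup A, IsCompl F B ∧ Module.Free ℤ F ∧
      ∀ f : B →+ ℤ, f = 0 := by
  classical
  set Bs : Submodule ℤ A := ⨅ f : A →ₗ[ℤ] ℤ, LinearMap.ker f with hBs
  set e : A →ₗ[ℤ] ((A →ₗ[ℤ] ℤ) → ℤ) := LinearMap.pi (fun f => f) with he
  have hker : LinearMap.ker e = Bs := by
    ext x
    simp [he, hBs, LinearMap.mem_ker, Submodule.mem_iInf, funext_iff]
  set Qm := A ⧸ Bs with hQm
  set ε : Qm →ₗ[ℤ] ((A →ₗ[ℤ] ℤ) → ℤ) := Bs.liftQ e (le_of_eq hker.symm) with hεdef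
  have hεinj : Function.Injective ε := by
    rw [← LinearMap.ker_eq_bot]
    exact Submodule.ker_liftQ_eq_bot _ _ _ (le_of_eq hker)
  haveI : Countable Qm := Bs.mkQ_surjective.countable
  haveI hQfree : Module.Free ℤ Qm := specker ε hεinj
  obtain ⟨σ, hσ⟩ := Module.projective_lifting_property Bs.mkQ LinearMap.id Bs.mkQ_surjective
  have hσap : ∀ y : Qm, Bs.mkQ (σ y) = y := fun y => by
    have : (Bs.mkQ ∘ₗ σ) y = LinearMap.id (R := ℤ) (M := Qm) y := by rw [hσ]
    simpa using this
  have memker : ∀ z : A, Bs.mkQ z = 0 → z ∈ Bs := fun z hz => by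
    rwa [Submodule.mkQ_apply, Submodule.Quotient.mk_eq_zero] at hz
  have kermem : ∀ z : A, z ∈ Bs → Bs.mkQ z = 0 := fun z hz => by
    rw [Submodule.mkQ_apply, Submodule.Quotient.mk_eq_zero]
    exact hz
  set Fs : Submodule ℤ A := LinearMap.range σ with hFs
  have hinf : Fs ⊓ Bs = ⊥ := by
    rw [eq_bot_iff]
    rintro x ⟨⟨y, rfl⟩, hxB⟩
    have h0 : Bs.mkQ (σ y) = 0 := kermem _ hxB
    rw [hσap y] at h0
    simp [h0]
  have hsup : Fs ⊔ Bs = ⊤ := by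
    rw [eq_top_iff]
    intro x _
    have hmem : x - σ (Bs.mkQ x) ∈ Bs :=
      memker _ (by rw [map_sub, hσap, sub_self])
    have : x = σ (Bs.mkQ x) + (x - σ (Bs.mkQ x)) := by abel
    rw [this]
    exact Submodule.add_mem_sup ⟨Bs.mkQ x, rfl⟩ hmem
  have hσinj : Function.Injective σ := by
    intro a b hab
    have := congrArg Bs.mkQ hab
    rwa [hσap, hσap] at this
  have hFfree : Module.Free ℤ ↥Fs :=
    Module.Free.of_equiv (LinearEquiv.ofInjective σ hσinj)
  -- homs from Bs vanish
  have hmemB : ∀ x : A, x - σ (Bs.mkQ x) ∈ Bs := fun x =>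
    memker _ (by rw [map_sub, hσap, sub_self])
  have hhom : ∀ f : ↥Bs →+ ℤ, f = 0 := by
    intro f
    set π : A →ₗ[ℤ] A := LinearMap.id - σ.comp Bs.mkQ with hπ
    have hπmem : ∀ x, π x ∈ Bs := fun x => by simpa [hπ] using hmemB x
    set pr : A →ₗ[ℤ] ↥Bs := π.codRestrict Bs hπmem with hpr
    set g : A →ₗ[ℤ] ℤ := f.toIntLinearMap.comp pr with hg
    have hBg : Bs ≤ LinearMap.ker g := by
      rw [hBs]
      exact iInf_le _ g
    ext ⟨b, hb⟩
    have h1 : g b = 0 := hBg hb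
    have h2 : pr b = ⟨b, hb⟩ := by
      apply Subtype.ext
      have : Bs.mkQ b = 0 := kermem _ hb
      simp [hpr, hπ, this]
    rw [hg] at h1
    simp only [LinearMap.comp_apply, h2] at h1
    simpa using h1
  -- convert to AddSubgroups
  refine ⟨Fs.toAddSubgroup, Bs.toAddSubgroup, ⟨?_, ?_⟩, ?_, ?_⟩
  · rw [disjoint_iff, eq_bot_iff]
    intro x hx
    have : x ∈ Fs ⊓ Bs := hx
    rw [hinf] at this
    simpa using this
  · rw [codisjoint_iff, eq_top_iff]
    intro x _
    have hx : x ∈ Fs ⊔ Bs := by rw [hsup]; trivial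
    obtain ⟨y, hy, z, hz, rfl⟩ := Submodule.mem_sup.mp hx
    exact add_mem ((SetLike.le_def.mp le_sup_left) hy) ((SetLike.le_def.mp le_sup_right) hz)
  · exact Module.Free.of_equiv (AddEquiv.refl ↥Fs).toIntLinearEquiv
  · intro f
    exact hhom f
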